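/- Let n ≥ 1, d ≥ 2, and let ℓ, m ∈ U = ℂ^{n+1} be linearly independent. Then dim_ℂ ( ℓ^{d−1}·U + ℓ^{d−2}·m·U ) = 2n + 1; i.e., the affine cone over the tangent space to the tangential variety T_{n,d} at the point [ℓ^{d−1}m] has dimension 2n+1, so T_{n,d} has dimension 2n. -/
import Mathlib


open MvPolynomial

/-- The linear form associated with a coefficient vector `v ∈ ℂ^{n+1}`. -/
noncomputable def lin {n : ℕ} (v : Fin (n + 1) → ℂ) : MvPolynomial (Fin (n + 1)) ℂ :=
  ∑ j, MvPolynomial.C (v j) * MvPolynomial.X j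

/-- The subspace `f·U = {f·u : u ∈ U}` of the polynomial ring, where `U` is the
space of linear forms. -/
noncomputable def mulU {n : ℕ} (f : MvPolynomial (Fin (n + 1)) ℂ) :
    Submodule ℂ (MvPolynomial (Fin (n + 1)) ℂ) :=
  Submodule.span ℂ (Set.range fun j : Fin (n + 1) => f * MvPolynomial.X j)

/-- The affine cone `ℓ^{d-1}·U + ℓ^{d-2}·m·U` over the tangent space to the tangential
variety `T_{n,d}` of the `d`-th Veronese variety at the point `[ℓ^{d-1} m]`. -/
noncomputable def tanCone {n : ℕ} (d : ℕ) (ℓ m : Fin (n + 1) → ℂ) :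
    Submodule ℂ (MvPolynomial (Fin (n + 1)) ℂ) :=
  mulU (lin ℓ ^ (d - 1)) ⊔ mulU (lin ℓ ^ (d - 2) * lin m)

/-- `v ∈ U_{i+1}`, i.e. the coordinates of `v` indexed by `{24i, …, 24i+23}` vanish. -/
def memU {n : ℕ} (i : Fin 3) (v : Fin (n + 1) → ℂ) : Prop :=
  ∀ j : Fin (n + 1), 24 * (i : ℕ) ≤ (j : ℕ) → (j : ℕ) < 24 * (i : ℕ) + 24 → v j = 0

/-- `S_3(U_{i+1})`: the span of all products of three linear forms belonging to `U_{i+1}`. -/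
noncomputable def S3U {n : ℕ} (i : Fin 3) : Submodule ℂ (MvPolynomial (Fin (n + 1)) ℂ) :=
  Submodule.span ℂ
    {p | ∃ a b c : Fin (n + 1) → ℂ,
      memU i a ∧ memU i b ∧ memU i c ∧ p = lin a * lin b * lin c}

/-- `v ∈ U_K`, the span of the variables `x_0, …, x_71`. -/
def memK {n : ℕ} (v : Fin (n + 1) → ℂ) : Prop :=
  ∀ j : Fin (n + 1), 72 ≤ (j : ℕ) → v j = 0

/-- `S_3(U_K)`: the span of all products of three linear forms in `x_0, …, x_71`. -/
noncomputable def S3K (n : ℕ) : Submodule ℂ (MvPolynomial (Fin (n + 1)) ℂ) :=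
  Submodule.span ℂ
    {p | ∃ a b c : Fin (n + 1) → ℂ,
      memK a ∧ memK b ∧ memK c ∧ p = lin a * lin b * lin c}

/-- The alternating sum `Σ_{j=1}^k (−1)^{j−1} C(k,j) · C(n−24j+3, 3)` (with the convention
`C(m,3) = 0` for `m < 3`, realized by truncated subtraction `n+3−24j`). -/
def altsum (n k : ℕ) : ℤ :=
  ∑ j ∈ Finset.Icc 1 k, (-1 : ℤ) ^ (j - 1) * (k.choose j : ℤ) * ((n + 3 - 24 * j).choose 3 : ℤ)

/-- `k = #{i : a_i ≠ 0}`. -/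
def kcount (a : Fin 3 → ℕ) : ℕ := (Finset.univ.filter fun i => a i ≠ 0).card

/-- The expected dimension `w(n, s; a_1, a_2, a_3)`, as an integer. -/
def expdimZ (n s : ℕ) (a : Fin 3 → ℕ) : ℤ :=
  min (altsum n (kcount a) + 48 * ((a 0 + a 1 + a 2 : ℕ) : ℤ) + (2 * n + 1) * s)
    (((n + 3).choose 3 : ℤ))

/-- The subspace `W(n, s; a_1, a_2, a_3)` determined by the given points. -/
noncomputable def Wspace {n s : ℕ} {a : Fin 3 → ℕ}
    (ℓ m : Fin s → Fin (n + 1) → ℂ)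
    (ℓ' m' : (i : Fin 3) → Fin (a i) → Fin (n + 1) → ℂ) :
    Submodule ℂ (MvPolynomial (Fin (n + 1)) ℂ) :=
  (⨆ i : {i : Fin 3 // a i ≠ 0},
      (S3U i.1 ⊔ ⨆ j : Fin (a i.1), tanCone 3 (ℓ' i.1 j) (m' i.1 j)))
    ⊔ ⨆ i : Fin s, tanCone 3 (ℓ i) (m i)

/-- The statement `T(n, s; a_1, a_2, a_3)`: some choice of points realizes the expected
dimension `w(n, s; a_1, a_2, a_3)`. -/
def TStmt (n s : ℕ) (a : Fin 3 → ℕ) : Prop :=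
  ∃ (ℓ m : Fin s → Fin (n + 1) → ℂ)
    (ℓ' m' : (i : Fin 3) → Fin (a i) → Fin (n + 1) → ℂ),
    (∀ (i : Fin 3) (j : Fin (a i)), memU i (ℓ' i j) ∧ memU i (m' i j)) ∧
    (Module.finrank ℂ (Wspace ℓ m ℓ' m') : ℤ) = expdimZ n s a

/-- `s_1(n) = 48k² + (11+4r)k + ⌊(4r²+22r+33)/48⌋` where `n = 24k + r`. -/
def s1 (n : ℕ) : ℕ :=
  48 * (n / 24) ^ 2 + (11 + 4 * (n % 24)) * (n / 24) +
    (4 * (n % 24) ^ 2 + 22 * (n % 24) + 33) / 48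

/-- `s_2(n) = s_1(n) + 1`. -/
def s2 (n : ℕ) : ℕ := s1 n + 1

/-- `t(n) = 4n − 37`. -/
def tfun (n : ℕ) : ℕ := 4 * n - 37

/-- The expected codimension `c(n)` of `W(n, t(n); s_1(n−24), 0, 0)`. -/
def cInt (n : ℕ) : ℤ :=
  ((n + 3).choose 3 : ℤ) - ((n - 21).choose 3 : ℤ) - (tfun n : ℤ) * (2 * n + 1) -
    48 * (s1 (n - 24) : ℤ)

-- dot product
noncomputable def dotc {n : ℕ} (a w : Fin (n + 1) → ℂ) : ℂ := ∑ j, a j * w j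

lemma dotc_add {n : ℕ} (a w w' : Fin (n + 1) → ℂ) :
    dotc a (w + w') = dotc a w + dotc a w' := by
  simp [dotc, Finset.sum_add_distrib, mul_add]

lemma dotc_single {n : ℕ} (a : Fin (n + 1) → ℂ) (k : Fin (n + 1)) :
    dotc a (Pi.single k 1) = a k := by
  simp [dotc, Pi.single_apply]

lemma dotc_smul_single {n : ℕ} (a : Fin (n + 1) → ℂ) (c : ℂ) (k : Fin (n + 1)) :
    dotc a (c • (Pi.single k 1 : Fin (n + 1) → ℂ)) = c * a k := by
  simp [dotc, Pi.single_apply, mul_comm]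

lemma eval_lin {n : ℕ} (w a : Fin (n + 1) → ℂ) :
    MvPolynomial.eval w (lin a) = dotc a w := by
  simp [lin, dotc]

lemma lin_single {n : ℕ} (j : Fin (n + 1)) :
    lin (Pi.single j (1 : ℂ)) = MvPolynomial.X j := by
  rw [lin, Finset.sum_eq_single j]
  · simp
  · intro b _ hb; simp [Pi.single_apply, hb]
  · simp

lemma lin_eq_zero {n : ℕ} {a : Fin (n + 1) → ℂ} (h : lin a = 0) : a = 0 := by
  funext k
  have := congrArg (MvPolynomial.eval (Pi.single k 1)) h
  rw [eval_lin, dotc_single] at this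
  simpa using this

lemma pair_facts {n : ℕ} {ℓ m : Fin (n + 1) → ℂ} (h : LinearIndependent ℂ ![ℓ, m]) :
    ℓ ≠ 0 ∧ m ≠ 0 ∧ ∀ c : ℂ, m ≠ c • ℓ := by
  rw [linearIndependent_fin2] at h
  obtain ⟨hm, hl⟩ := h
  simp only [Matrix.cons_val_one, Matrix.head_cons, Matrix.cons_val_zero] at hm hl
  refine ⟨?_, hm, ?_⟩
  · intro h0
    exact hl 0 (by simp [h0])
  · intro c hc
    have hc0 : c ≠ 0 := by rintro rfl; simp at hc; exact hm hc
    exact hl c⁻¹ (by rw [hc, smul_smul, inv_mul_cancel₀ hc0, one_smul])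

lemma exists_minor {n : ℕ} {ℓ m : Fin (n + 1) → ℂ} (h : LinearIndependent ℂ ![ℓ, m]) :
    ∃ i j, ℓ i * m j - ℓ j * m i ≠ 0 := by
  obtain ⟨hl, hm, hne⟩ := pair_facts h
  by_contra hcon
  push_neg at hcon
  obtain ⟨i0, hi0⟩ : ∃ i0, ℓ i0 ≠ 0 := by
    by_contra hz; push_neg at hz; exact hl (funext fun i => hz i)
  refine hne (m i0 / ℓ i0) (funext fun j => ?_)
  have := hcon i0 j
  simp only [Pi.smul_apply, smul_eq_mul]
  rw [div_mul_eq_mul_div, eq_div_iff hi0]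
  linear_combination this

lemma exists_dual_pair {n : ℕ} {ℓ m : Fin (n + 1) → ℂ} (h : LinearIndependent ℂ ![ℓ, m]) :
    ∀ s t : ℂ, ∃ w, dotc ℓ w = s ∧ dotc m w = t := by
  obtain ⟨i, j, hΔ⟩ := exists_minor h
  intro s t
  set Δ := ℓ i * m j - ℓ j * m i with hΔdef
  refine ⟨((s * m j - t * ℓ j) / Δ) • (Pi.single i 1 : Fin (n + 1) → ℂ) +
      ((t * ℓ i - s * m i) / Δ) • (Pi.single j 1 : Fin (n + 1) → ℂ), ?_, ?_⟩ <;>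
    rw [dotc_add, dotc_smul_single, dotc_smul_single] <;> field_simp <;> ring

lemma quadratic_eq {n : ℕ} {ℓ m u v : Fin (n + 1) → ℂ} (h : LinearIndependent ℂ ![ℓ, m])
    (heq : lin ℓ * lin u + lin m * lin v = 0) :
    ∃ c : ℂ, u = c • m ∧ v = -c • ℓ := by
  have hq : ∀ w, dotc ℓ w * dotc u w + dotc m w * dotc v w = 0 := by
    intro w
    have := congrArg (MvPolynomial.eval w) heq
    simpa [eval_lin] using this
  have hB : ∀ w w', dotc ℓ w * dotc u w' + dotc ℓ w' * dotc u w +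
      dotc m w * dotc v w' + dotc m w' * dotc v w = 0 := by
    intro w w'
    have h1 := hq (w + w')
    rw [dotc_add, dotc_add, dotc_add, dotc_add] at h1
    linear_combination h1 - hq w - hq w'
  obtain ⟨w1, hw1l, hw1m⟩ := exists_dual_pair h 1 0
  obtain ⟨w2, hw2l, hw2m⟩ := exists_dual_pair h 0 1
  have hα : dotc u w1 = 0 := by
    have := hq w1; rw [hw1l, hw1m] at this; linear_combination this
  have hδ : dotc v w2 = 0 := by
    have := hq w2; rw [hw2l, hw2m] at this; linear_combination this
  have hβγ : dotc u w2 + dotc v w1 = 0 := by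
    have := hq (w1 + w2)
    rw [dotc_add, dotc_add, dotc_add, dotc_add, hw1l, hw2l, hw1m, hw2m] at this
    linear_combination this - hα - hδ
  have hu : ∀ k, u k = -(dotc v w1) * m k := by
    intro k
    have := hB w1 (Pi.single k 1)
    simp only [hw1l, hw1m, dotc_single] at this
    linear_combination this - ℓ k * hα
  have hv : ∀ k, v k = dotc v w1 * ℓ k := by
    intro k
    have := hB w2 (Pi.single k 1)
    simp only [hw2l, hw2m, dotc_single] at this
    linear_combination this - m k * hδ - ℓ k * hβγ
  refine ⟨-(dotc v w1), funext fun k => ?_, funext fun k => ?_⟩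
  · simpa using hu k
  · simp only [Pi.smul_apply, smul_eq_mul, neg_neg]
    exact hv k

noncomputable def linMap (n : ℕ) : (Fin (n + 1) → ℂ) →ₗ[ℂ] MvPolynomial (Fin (n + 1)) ℂ where
  toFun := lin
  map_add' a b := by
    simp [lin, ← Finset.sum_add_distrib, add_mul, map_add]
  map_smul' c a := by
    simp only [lin, Pi.smul_apply, smul_eq_mul, map_mul, RingHom.id_apply, Finset.smul_sum,
      MvPolynomial.smul_eq_C_mul, mul_assoc]

lemma mulU_eq_range {n : ℕ} (f : MvPolynomial (Fin (n + 1)) ℂ) :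
    mulU f = LinearMap.range ((LinearMap.mulLeft ℂ f).comp (linMap n)) := by
  apply le_antisymm
  · rw [mulU, Submodule.span_le]
    rintro _ ⟨j, rfl⟩
    exact ⟨Pi.single j 1, by simp [linMap, lin_single]⟩
  · rintro _ ⟨u, rfl⟩
    simp only [LinearMap.coe_comp, Function.comp_apply, LinearMap.mulLeft_apply]
    show f * lin u ∈ mulU f
    rw [lin, Finset.mul_sum]
    refine Submodule.sum_mem _ fun j _ => ?_
    have : f * (MvPolynomial.C (u j) * MvPolynomial.X j) = u j • (f * MvPolynomial.X j) := by
      rw [MvPolynomial.smul_eq_C_mul]; ring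
    rw [this]
    exact Submodule.smul_mem _ _ (Submodule.subset_span ⟨j, rfl⟩)

@[simp] lemma linMap_apply {n : ℕ} (u : Fin (n + 1) → ℂ) : linMap n u = lin u := rfl


/-- The affine cone `ℓ^{d−1}·U + ℓ^{d−2}·m·U` over the tangent space to `T_{n,d}` at
`[ℓ^{d−1} m]`, with `ℓ, m` linearly independent, has dimension `2n + 1`. -/
theorem tanCone_dim (n d : ℕ) (hn : 1 ≤ n) (hd : 2 ≤ d)
    (ℓ m : Fin (n + 1) → ℂ) (h : LinearIndependent ℂ ![ℓ, m]) :
    Module.finrank ℂ (tanCone d ℓ m) = 2 * n + 1 := by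
  obtain ⟨hl0, hm0, -⟩ := pair_facts h
  set f1 := lin ℓ ^ (d - 1) with hf1
  set f2 := lin ℓ ^ (d - 2) * lin m with hf2
  set Φ := ((LinearMap.mulLeft ℂ f1).comp (linMap n)).coprod
    ((LinearMap.mulLeft ℂ f2).comp (linMap n)) with hΦ
  have hrange : tanCone d ℓ m = LinearMap.range Φ := by
    rw [tanCone, mulU_eq_range, mulU_eq_range, hΦ, LinearMap.range_coprod]
  have hLne : lin ℓ ≠ 0 := fun hh => hl0 (lin_eq_zero hh)
  have hpow : f1 = lin ℓ ^ (d - 2) * lin ℓ := by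
    rw [hf1, ← pow_succ]; congr 1; omega
  have hΦapply : ∀ u v : Fin (n + 1) → ℂ, Φ (u, v) = f1 * lin u + f2 * lin v := by
    intro u v
    simp [hΦ, LinearMap.coprod_apply]
  have hne : ((m, -ℓ) : (Fin (n + 1) → ℂ) × (Fin (n + 1) → ℂ)) ≠ 0 := by
    intro hh
    exact hm0 (congrArg Prod.fst hh)
  have hker : LinearMap.ker Φ =
      Submodule.span ℂ {((m, -ℓ) : (Fin (n + 1) → ℂ) × (Fin (n + 1) → ℂ))} := by
    apply le_antisymm
    · rintro ⟨u, v⟩ huv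
      rw [LinearMap.mem_ker, hΦapply] at huv
      have heq : lin ℓ ^ (d - 2) * (lin ℓ * lin u + lin m * lin v) = 0 := by
        rw [hpow] at huv
        rw [hf2] at huv
        linear_combination huv
      have heq2 : lin ℓ * lin u + lin m * lin v = 0 := by
        rcases mul_eq_zero.mp heq with hc | hc
        · exact absurd hc (pow_ne_zero _ hLne)
        · exact hc
      obtain ⟨c, hcu, hcv⟩ := quadratic_eq h heq2
      rw [Submodule.mem_span_singleton]
      refine ⟨c, ?_⟩
      rw [Prod.smul_mk, Prod.mk.injEq]
      refine ⟨hcu.symm, ?_⟩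
      rw [hcv]; simp
    · rw [Submodule.span_le, Set.singleton_subset_iff, SetLike.mem_coe, LinearMap.mem_ker,
        hΦapply]
      have hneg : lin (-ℓ) = -(lin ℓ) := map_neg (linMap n) ℓ
      rw [hneg, hpow, hf2]; ring
  have h1 := LinearMap.finrank_range_add_finrank_ker Φ
  rw [hker, finrank_span_singleton hne, Module.finrank_prod, Module.finrank_fin_fun] at h1
  rw [hrange]
  omega
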